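/- Let R = ⊕_{i∈I} 𝔽[∂]u_i be the free Lie conformal algebra with zero λ-bracket (I finite), and let 𝒱 be an algebra of differential functions in the variables u_i. Then the formula u_{i λ} f = Σ_{n≥0} λ^n ∂f/∂u_i^{(n)} defines a structure of an R-module on 𝒱, on which each u_{i λ} acts by derivations of the product of 𝒱. -/

import Mathlib

noncomputable section

namespace Stmt13Aux

variable {F : Type*} [Field F] {I : Type*} {V : Type*} [CommRing V] [Algebra F V]

def actC (del : I → ℕ → Derivation F V V) (n : ℕ) :
    (I →₀ Polynomial F) →ₗ[F] Module.End F V :=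
  Finsupp.lsum F fun i =>
    ∑ k ∈ Finset.range (n + 1),
      (Polynomial.lcoeff F k).smulRight (((-1 : F) ^ k) • (del i (n - k)).toLinearMap)

lemma actC_single (del : I → ℕ → Derivation F V V) (n : ℕ) (i : I) (q : Polynomial F) (f : V) :
    actC del n (Finsupp.single i q) f
      = ∑ k ∈ Finset.range (n + 1), ((-1 : F) ^ k * q.coeff k) • del i (n - k) f := by
  simp [actC, Finsupp.lsum_single, LinearMap.sum_apply, smul_smul, mul_comm]

lemma actC_one (del : I → ℕ → Derivation F V V) (n : ℕ) (i : I) (f : V) :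
    actC del n (Finsupp.single i 1) f = del i n f := by
  rw [actC_single, Finset.sum_eq_single 0]
  · simp
  · intro k hk hk0
    simp [Polynomial.coeff_one, hk0]
  · simp

lemma del_actC (del : I → ℕ → Derivation F V V)
    (hcomm : ∀ (i j : I) (n m : ℕ) (f : V), del i n (del j m f) = del j m (del i n f))
    (i : I) (N n : ℕ) (b : I →₀ Polynomial F) (f : V) :
    del i N (actC del n b f) = actC del n b (del i N f) := by
  induction b using Finsupp.induction_linear with
  | zero => simp
  | add a b ha hb => simp [LinearMap.add_apply, ha, hb]
  | single j q =>
      rw [actC_single, actC_single, map_sum]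
      exact Finset.sum_congr rfl fun k _ => by rw [Derivation.map_smul, hcomm]

end Stmt13Aux

open Stmt13Aux

/-- Let `R = ⊕_{i∈I} 𝔽[∂]u_i` be the free Lie conformal algebra with zero
`λ`-bracket (`I` finite; `R` is encoded as `I →₀ 𝔽[X]` with `∂` acting as multiplication
by `X` and `u_i = single i 1`), and let `𝒱` be an algebra of differential functions in
the variables `u_i`.  Then the formula `u_{iλ} f = Σ_{n≥0} λ^n ∂f/∂u_i^{(n)}` defines a
structure of an `R`-module on `𝒱` (here `actC n a` denotes the coefficient of `λ^n` in
`a_λ`), on which each `u_{iλ}` acts by derivations of the product of `𝒱`. -/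
theorem stmt13 (F : Type*) [Field F] [CharZero F]
    (I : Type*) [Fintype I]
    -- 𝒱, an algebra of differential functions in the variables u_i, i ∈ I
    (V : Type*) [CommRing V] [Algebra F V]
    (Dv : Derivation F V V)  -- the derivation ∂ of 𝒱
    (del : I → ℕ → Derivation F V V)  -- the derivations ∂/∂u_i^{(n)}
    (hcomm : ∀ (i j : I) (n m : ℕ) (f : V), del i n (del j m f) = del j m (del i n f))
    (hDdel0 : ∀ (i : I) (f : V), del i 0 (Dv f) = Dv (del i 0 f))
    (hDdel : ∀ (i : I) (n : ℕ) (f : V),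
        del i (n + 1) (Dv f) = Dv (del i (n + 1) f) + del i n f)
    (hfin : ∀ f : V, {p : I × ℕ | del p.1 p.2 f ≠ 0}.Finite)
    -- ∂ on R = I →₀ 𝔽[X] is multiplication by X in each component:
    (pa : (I →₀ Polynomial F) →ₗ[F] (I →₀ Polynomial F))
    (hpa : ∀ (i : I) (q : Polynomial F),
        pa (Finsupp.single i q) = Finsupp.single i (Polynomial.X * q)) :
    -- conclusion: an R-module structure on 𝒱, with u_{iλ} f = Σ_n λ^n ∂f/∂u_i^{(n)},
    -- acting by derivations
    ∃ actC : ℕ → (I →₀ Polynomial F) →ₗ[F] Module.End F V,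
      -- the λ-action of the generators u_i
      (∀ (i : I) (n : ℕ) (f : V), actC n (Finsupp.single i 1) f = del i n f) ∧
      -- sesquilinearity (∂a)_λ f = −λ (a_λ f)
      (∀ (a : I →₀ Polynomial F) (n : ℕ) (f : V),
          actC n (pa a) f = if n = 0 then 0 else -(actC (n - 1) a f)) ∧
      -- sesquilinearity a_λ (∂f) = (∂ + λ)(a_λ f)
      (∀ (a : I →₀ Polynomial F) (f : V), actC 0 a (Dv f) = Dv (actC 0 a f)) ∧
      (∀ (a : I →₀ Polynomial F) (n : ℕ) (f : V),
          actC (n + 1) a (Dv f) = Dv (actC (n + 1) a f) + actC n a f) ∧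
      -- since the λ-bracket of R is zero:  a_λ (b_μ f) = b_μ (a_λ f)
      (∀ (a b : I →₀ Polynomial F) (m n : ℕ) (f : V),
          actC m a (actC n b f) = actC n b (actC m a f)) ∧
      -- the λ-action is by derivations of the product of 𝒱
      (∀ (a : I →₀ Polynomial F) (n : ℕ) (f g : V),
          actC n a (f * g) = actC n a f * g + f * actC n a g) ∧
      -- the λ-action is polynomial in λ
      (∀ (a : I →₀ Polynomial F) (f : V), ∃ N, ∀ n, N ≤ n → actC n a f = 0) := by
  refine ⟨actC del, fun i n f => actC_one del n i f, ?_, ?_, ?_, ?_, ?_, ?_⟩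
  · -- (∂a)_λ
    intro a n f
    induction a using Finsupp.induction_linear with
    | zero => simp
    | add a b ha hb =>
        rw [map_add, map_add, LinearMap.map_add, LinearMap.add_apply, ha, hb,
          LinearMap.add_apply]
        split_ifs <;> simp [add_comm]
    | single i q =>
        rw [hpa]
        cases n with
        | zero =>
            rw [actC_single]
            simp [Polynomial.mul_coeff_zero]
        | succ m =>
            rw [actC_single, if_neg (Nat.succ_ne_zero m), Nat.add_sub_cancel, actC_single,
              Finset.sum_range_succ', ← Finset.sum_neg_distrib]
            simp [Polynomial.coeff_X_mul, pow_succ, Nat.succ_sub_succ, Polynomial.mul_coeff_zero,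
              mul_comm]
  · -- a_λ ∘ ∂, coefficient 0
    intro a f
    induction a using Finsupp.induction_linear with
    | zero => simp
    | add a b ha hb => simp [LinearMap.add_apply, ha, hb]
    | single i q => simp [actC_single, hDdel0]
  · -- a_λ ∘ ∂, higher coefficients
    intro a n f
    induction a using Finsupp.induction_linear with
    | zero => simp
    | add a b ha hb =>
        simp only [map_add, LinearMap.add_apply, ha, hb, map_add]
        abel
    | single i q =>
        rw [actC_single, actC_single, actC_single]
        have key : ∀ k ∈ Finset.range (n + 2),
            ((-1 : F) ^ k * q.coeff k) • del i (n + 1 - k) (Dv f)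
              = ((-1 : F) ^ k * q.coeff k) • Dv (del i (n + 1 - k) f)
                + (if k ≤ n then ((-1 : F) ^ k * q.coeff k) • del i (n - k) f else 0) := by
          intro k hk
          by_cases h : k ≤ n
          · have h1 : n + 1 - k = (n - k) + 1 := by omega
            rw [h1, hDdel, smul_add, if_pos h]
          · have hk' : k = n + 1 := by
              simp only [Finset.mem_range] at hk; omega
            subst hk'
            simp [hDdel0]
        rw [Finset.sum_congr rfl key, Finset.sum_add_distrib]
        congr 1
    
    
        · rw [map_sum]
          exact Finset.sum_congr rfl fun k _ => (Derivation.map_smul Dv _ _).symm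
        · rw [Finset.sum_range_succ, if_neg (by omega), add_zero]
          exact Finset.sum_congr rfl fun k hk =>
            if_pos (by simp only [Finset.mem_range] at hk; omega)
  · -- commutativity
    intro a b m n f
    induction a using Finsupp.induction_linear with
    | zero => simp
    | add a c ha hc => simp [LinearMap.add_apply, ha, hc]
    | single i q =>
        rw [actC_single, actC_single, map_sum]
        exact Finset.sum_congr rfl fun k _ => by
          rw [map_smul, del_actC del hcomm]  -- End map_smul is fine here
  · -- derivation property
    intro a n f g
    induction a using Finsupp.induction_linear with
    | zero => simp
    | add a b ha hb =>
        simp only [map_add, LinearMap.add_apply, ha, hb]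
        ring
    | single i q =>
        rw [actC_single, actC_single, actC_single, Finset.sum_mul, Finset.mul_sum,
          ← Finset.sum_add_distrib]
        refine Finset.sum_congr rfl fun k _ => ?_
        rw [Derivation.leibniz]
        simp only [smul_eq_mul, Algebra.smul_def]
        ring
  · -- polynomial in λ
    intro a f
    set M : ℕ := (hfin f).toFinset.sup Prod.snd with hM
    set D : ℕ := Finset.univ.sup (fun i => (a i).natDegree) with hD
    refine ⟨M + D + 1, fun n hn => ?_⟩
    have ha : a = ∑ i ∈ a.support, Finsupp.single i (a i) := (Finsupp.sum_single a).symm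
    rw [ha, map_sum, LinearMap.sum_apply]
    refine Finset.sum_eq_zero fun i _ => ?_
    rw [actC_single]
    refine Finset.sum_eq_zero fun k hk => ?_
    by_cases hc : (a i).coeff k = 0
    · simp [hc]
    · have hkD : k ≤ D :=
        le_trans (Polynomial.le_natDegree_of_ne_zero hc)
          (Finset.le_sup (f := fun i => (a i).natDegree) (Finset.mem_univ i))
      have hz : del i (n - k) f = 0 := by
        by_contra h
        have hmem : (i, n - k) ∈ (hfin f).toFinset := by
          simp only [Set.Finite.mem_toFinset, Set.mem_setOf_eq]
          exact h
        have : n - k ≤ M := Finset.le_sup (f := Prod.snd) hmem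
        omega
      simp [hz]
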